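/- For the separate-group direct IMU one-step Jacobian F^S = [[I,0,0],[−(C̄(u−b̄))^∧ T, I, 0],[−½T²(C̄(u−b̄))^∧, T I, I]] and the state-dependent null space N_S(v̄, r̄) = [[g, 0],[−v̄^∧ g, 0],[−r̄^∧ g, I₃]], the relation F^S N_S(v̄_k, r̄_k) = N_S(v̄_{k+1}, r̄_{k+1}) holds when v̄_{k+1} = v̄_k + T C̄(u − b̄) + T g and r̄_{k+1} = r̄_k + T v̄_k + ½T²(C̄(u−b̄) + g), using the identity g^∧ g = 0 and a×b = −b×a. -/

import Mathlib

open Matrix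
open scoped Matrix

/-- The skew-symmetric matrix `a^∧` of `a ∈ ℝ³`. -/
def hat (a : Fin 3 → ℝ) : Matrix (Fin 3) (Fin 3) ℝ :=
  !![0, -a 2, a 1; a 2, 0, -a 0; -a 1, a 0, 0]

/-- Index type for the 9-dimensional error state `(δφ, δv, δr)`. -/
abbrev Idx9 := Fin 3 ⊕ (Fin 3 ⊕ Fin 3)

/-- The separate-group one-step direct IMU Jacobian
`F^S = [[I,0,0],[−T a^∧, I, 0],[−½T² a^∧, T I, I]]` with `a = C̄(u − b̄)`. -/
noncomputable def FS (a : Fin 3 → ℝ) (T : ℝ) : Matrix Idx9 Idx9 ℝ :=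
  fromBlocks 1 0
    (fromRows (-(T • hat a)) (-(((1 : ℝ) / 2 * T ^ 2) • hat a)))
    (fromBlocks 1 0 (T • (1 : Matrix (Fin 3) (Fin 3) ℝ)) 1)

/-- The state-dependent null space
`N_S(v̄, r̄) = [[g, 0],[−v̄^∧ g, 0],[−r̄^∧ g, I₃]] ∈ ℝ^{9×4}`. -/
def NS (g v r : Fin 3 → ℝ) : Matrix Idx9 (Fin 1 ⊕ Fin 3) ℝ :=
  fromBlocks (Matrix.of fun i (_ : Fin 1) => g i) 0
    (fromRows (Matrix.of fun i (_ : Fin 1) => (-(v ⨯₃ g)) i)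
      (Matrix.of fun i (_ : Fin 1) => (-(r ⨯₃ g)) i))
    (fromRows 0 1)

/-- The one-step linearized dynamics transport the separate-group null space to the
null space at the propagated state:
`F^S N_S(v̄_k, r̄_k) = N_S(v̄_{k+1}, r̄_{k+1})` where
`v̄_{k+1} = v̄_k + T C̄(u−b̄) + T g` and `r̄_{k+1} = r̄_k + T v̄_k + ½T²(C̄(u−b̄) + g)`. -/
theorem FS_transports_nullspace
    (Cbar : Matrix (Fin 3) (Fin 3) ℝ) (u bbar g vk rk vk1 rk1 : Fin 3 → ℝ) (T : ℝ)
    (hv : vk1 = vk + T • (Cbar *ᵥ (u - bbar)) + T • g)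
    (hr : rk1 = rk + T • vk + ((1 : ℝ) / 2 * T ^ 2) • (Cbar *ᵥ (u - bbar) + g)) :
    FS (Cbar *ᵥ (u - bbar)) T * NS g vk rk = NS g vk1 rk1 := by
  subst hv hr
  set a := Cbar *ᵥ (u - bbar) with ha
  ext i j
  simp only [FS, NS, Matrix.mul_apply]
  cases i with
  | inl i =>
    cases j with
    | inl j => simp [Fintype.sum_sum_type, fromBlocks, Matrix.one_apply, Fin.sum_univ_three]
    | inr j => simp [Fintype.sum_sum_type, fromBlocks]
  | inr i =>
    cases i with
    | inl i =>
      cases j with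
      | inl j =>
        simp [Fintype.sum_sum_type, fromBlocks, hat, crossProduct,
          Matrix.one_apply, Fin.sum_univ_three, Matrix.mulVec, dotProduct]
        fin_cases i <;> fin_cases j <;>
          simp [hat, crossProduct, Matrix.mul_apply, Fin.sum_univ_three] <;> ring
      | inr j =>
        simp [Fintype.sum_sum_type, fromBlocks, hat, Matrix.one_apply,
          Fin.sum_univ_three]
    | inr i =>
      cases j with
      | inl j =>
        simp [Fintype.sum_sum_type, fromBlocks, hat, crossProduct,
          Matrix.one_apply, Fin.sum_univ_three, Matrix.mulVec, dotProduct]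
        fin_cases i <;> fin_cases j <;>
          simp [hat, crossProduct, Matrix.mul_apply, Fin.sum_univ_three] <;> ring
      | inr j =>
        simp [Fintype.sum_sum_type, fromBlocks, hat, Matrix.one_apply,
          Fin.sum_univ_three]
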